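/- Let N be a positive integer, let z_1, …, z_N be the zeros of the physicists' Hermite polynomial H_N, and define the power sums m_p := z_1^p + ⋯ + z_N^p for integers p ≥ 0. Then m_0 = N, m_p = 0 for every odd p, and for every even integer k ≥ 0 the recurrence 2 m_{k+2} = Σ_{s=0}^{k/2} m_{2s} m_{k−2s} − (k+1) m_k holds. -/

import Mathlib

open Polynomial Finset

/-- The physicists' Hermite polynomials, satisfying
`H_{n+1}(x) = 2 x H_n(x) - H_n'(x)`, equivalently
`H_n(x) = (-1)^n e^{x^2} (d/dx)^n e^{-x^2}`. -/
noncomputable def physHermite : ℕ → Polynomial ℝ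
  | 0 => 1
  | n + 1 => 2 * X * physHermite n - derivative (physHermite n)

lemma ph_succ (n : ℕ) : physHermite (n+1) = 2 * X * physHermite n - derivative (physHermite n) := rfl

lemma ph_deriv (n : ℕ) :
    derivative (physHermite n) = C (2*n : ℝ) * physHermite (n-1) := by
  suffices h : ∀ n : ℕ, derivative (physHermite n) = C (2*n : ℝ) * physHermite (n-1) ∧
      derivative (physHermite (n+1)) = C (2*(n+1) : ℝ) * physHermite n from (h n).1
  intro n
  induction n with
  | zero =>
    refine ⟨by simp [physHermite], ?_⟩
    rw [ph_succ]
    show derivative (2 * X * 1 - derivative 1) = _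
    simp only [derivative_one, mul_one, sub_zero, derivative_mul, derivative_X,
      derivative_ofNat, zero_mul, zero_add, mul_one, physHermite]
    norm_num
    simp only [C_mul, map_ofNat, C_1, mul_one]
  | succ n ih =>
    have h2 : derivative (physHermite (n+1)) = C (2*((n:ℝ)+1)) * physHermite n := ih.2
    constructor
    · rw [h2]; push_cast; ring_nf
    · rw [ph_succ (n+1), derivative_sub]
      simp only [derivative_mul, derivative_X, derivative_C, derivative_ofNat, zero_mul,
        zero_add, mul_one]
      rw [h2]
      simp only [derivative_mul, derivative_C, zero_mul, zero_add]
      have : (2 : ℝ[X]) * X * physHermite n - derivative (physHermite n) = physHermite (n+1) :=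
        (ph_succ n).symm
      push_cast
      calc 2 * physHermite (n+1) + 2 * X * (C (2*((n:ℝ)+1)) * physHermite n)
            - C (2*((n:ℝ)+1)) * derivative (physHermite n)
          = 2 * physHermite (n+1) + C (2*((n:ℝ)+1)) *
              (2 * X * physHermite n - derivative (physHermite n)) := by ring
        _ = 2 * physHermite (n+1) + C (2*((n:ℝ)+1)) * physHermite (n+1) := by rw [this]
        _ = C (2*((n:ℝ)+1+1)) * physHermite (n+1) := by
              simp only [C_mul, C_add, C_1, map_ofNat]; ring

lemma ph_ode (n : ℕ) :
    derivative (derivative (physHermite n)) =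
      2 * X * derivative (physHermite n) - C (2*n : ℝ) * physHermite n := by
  cases n with
  | zero => simp [physHermite]
  | succ m =>
    rw [ph_deriv (m+1)]
    simp only [Nat.add_sub_cancel]
    rw [derivative_mul, derivative_C, zero_mul, zero_add, ph_succ m]
    ring

lemma ph_comp_neg (n : ℕ) :
    (physHermite n).comp (-X) = (-1)^n * physHermite n := by
  induction n with
  | zero => simp [physHermite]
  | succ n ih =>
    have hd : derivative ((physHermite n).comp (-X)) =
        (derivative (physHermite n)).comp (-X) * (-1) := by
      rw [derivative_comp]; simp
    have hd' : (derivative (physHermite n)).comp (-X) = -derivative ((physHermite n).comp (-X)) := by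
      rw [hd]; ring
    rw [ph_succ, sub_comp, mul_comp, mul_comp, X_comp, hd', ih]
    simp only [derivative_mul, derivative_pow, derivative_one, derivative_neg, derivative_X,
      ofNat_comp, neg_zero, mul_zero, zero_mul, zero_add, add_zero]
    ring

lemma ph_degree (n : ℕ) :
    (physHermite n).natDegree = n ∧ (physHermite n).coeff n = 2^n := by
  induction n with
  | zero => simp [physHermite]
  | succ n ih =>
    have hp0 : physHermite n ≠ 0 := by
      intro h
      have := ih.2
      rw [h] at this
      simp at this
      exact absurd this.symm (pow_ne_zero n two_ne_zero)
    have h2X : (2 * X : ℝ[X]) ≠ 0 := by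
      intro h
      have := congrArg (fun p => p.coeff 1) h
      simp at this
    have hdeg2X : (2 * X : ℝ[X]).natDegree = 1 := by
      compute_degree!
    have hmul : (2 * X * physHermite n).natDegree = n + 1 := by
      rw [natDegree_mul h2X hp0, hdeg2X, ih.1, add_comm]
    have hder : (derivative (physHermite n)).natDegree < n + 1 :=
      lt_of_le_of_lt (natDegree_derivative_le _) (by omega)
    constructor
    · rw [ph_succ, natDegree_sub_eq_left_of_natDegree_lt (hmul ▸ hder), hmul]
    · rw [ph_succ, coeff_sub, coeff_eq_zero_of_natDegree_lt hder, sub_zero,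
        show (2 * X : ℝ[X]) * physHermite n = C 2 * (X * physHermite n) by
          rw [map_ofNat]; ring,
        coeff_C_mul, coeff_X_mul, ih.2]
      ring

lemma ph_factor (N : ℕ) (z : Fin N → ℝ) (hinj : Function.Injective z)
    (hzero : ∀ j, (physHermite N).eval (z j) = 0) :
    ∃ c : ℝ, c ≠ 0 ∧ physHermite N = C c * ∏ i, (X - C (z i)) := by
  have hH0 : physHermite N ≠ 0 := by
    intro h
    have := (ph_degree N).2
    rw [h] at this
    simp at this
    exact absurd this.symm (pow_ne_zero N two_ne_zero)
  have hdvd : (∏ i, (X - C (z i))) ∣ physHermite N := by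
    apply Finset.prod_dvd_of_coprime
    · exact ((pairwise_coprime_X_sub_C hinj).set_pairwise _)
    · intro i _
      rw [dvd_iff_isRoot]
      exact hzero i
  obtain ⟨q, hq⟩ := hdvd
  have hP0 : (∏ i : Fin N, (X - C (z i))) ≠ 0 :=
    prod_ne_zero_iff.2 fun i _ => X_sub_C_ne_zero (z i)
  have hq0 : q ≠ 0 := by
    intro h; rw [h, mul_zero] at hq; exact hH0 hq
  have hPdeg : (∏ i : Fin N, (X - C (z i))).natDegree = N := by
    rw [natDegree_prod _ _ fun i _ => X_sub_C_ne_zero (z i)]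
    simp [natDegree_X_sub_C]
  have hqdeg : q.natDegree = 0 := by
    have := natDegree_mul hP0 hq0
    rw [← hq, (ph_degree N).1, hPdeg] at this
    omega
  obtain ⟨c, rfl⟩ := natDegree_eq_zero.mp hqdeg
  refine ⟨c, ?_, by rw [hq, mul_comm]⟩
  intro h; rw [h, map_zero] at hq0; exact hq0 rfl

lemma eval_derivative_prod_X_sub_C {ι : Type*} [DecidableEq ι] (s : Finset ι) (w : ι → ℝ) (a : ℝ) :
    eval a (derivative (∏ i ∈ s, (X - C (w i)))) = ∑ l ∈ s, ∏ i ∈ s.erase l, (a - w i) := by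
  induction s using Finset.induction with
  | empty => simp
  | insert b s hb ih =>
    rw [Finset.prod_insert hb, derivative_mul, derivative_sub, derivative_X, derivative_C,
      sub_zero, one_mul, eval_add, eval_mul, eval_sub, eval_X, eval_C, ih,
      Finset.sum_insert hb, Finset.erase_insert hb]
    rw [Finset.mul_sum, eval_prod]
    simp only [eval_sub, eval_X, eval_C]
    rw [Finset.sum_congr rfl (fun l hl => ?_), add_comm]
    rw [Finset.erase_insert_of_ne (by rintro rfl; exact hb hl), Finset.prod_insert
      (fun h => hb (Finset.mem_of_mem_erase h))]

lemma ph_root_sum (N : ℕ) (z : Fin N → ℝ) (hinj : Function.Injective z)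
    (hzero : ∀ j, (physHermite N).eval (z j) = 0) (j : Fin N) :
    ∑ l ∈ Finset.univ.erase j, (z j - z l)⁻¹ = z j := by
  obtain ⟨c, hc, hfac⟩ := ph_factor N z hinj hzero
  set a := z j with ha
  set Q : Polynomial ℝ := ∏ i ∈ Finset.univ.erase j, (X - C (z i)) with hQ
  have hsplit : physHermite N = C c * ((X - C a) * Q) := by
    rw [hfac, ← Finset.mul_prod_erase Finset.univ (fun i => X - C (z i)) (Finset.mem_univ j)]
  have hQa : Q.eval a ≠ 0 := by
    rw [hQ]
    simp only [eval_prod, eval_sub, eval_X, eval_C]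
    refine prod_ne_zero_iff.2 fun i hi => ?_
    rw [sub_ne_zero]
    exact fun h => (Finset.mem_erase.mp hi).1 (hinj h.symm)
  -- derivatives
  have hD : derivative (physHermite N) = C c * (Q + (X - C a) * derivative Q) := by
    rw [hsplit]
    simp only [derivative_mul, derivative_C, derivative_sub, derivative_X, zero_mul, zero_add,
      sub_zero, one_mul]
  have hDD : derivative (derivative (physHermite N)) =
      C c * (2 * derivative Q + (X - C a) * derivative (derivative Q)) := by
    rw [hD]
    simp only [derivative_mul, derivative_add, derivative_C, derivative_sub, derivative_X,
      zero_mul, zero_add, sub_zero, one_mul]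
    ring
  -- evaluate the ODE at a
  have hode := congrArg (eval a) (ph_ode N)
  rw [hDD, hD] at hode
  simp only [eval_mul, eval_add, eval_sub, eval_X, eval_C, eval_ofNat, sub_self, zero_mul,
    add_zero, eval_smul] at hode
  have heval : (physHermite N).eval a = 0 := hzero j
  rw [heval] at hode
  -- hode : c * (2 * (derivative Q).eval a) = 2 * a * (c * Q.eval a) - 2*N * 0
  have hkey : (derivative Q).eval a = a * Q.eval a := by
    rw [mul_zero, sub_zero] at hode
    have h3 : c * (2 * eval a (derivative Q)) = c * (2 * (a * eval a Q)) := by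
      rw [hode]; ring
    have h4 := mul_left_cancel₀ hc h3
    linarith
  -- expand derivative of product
  have hDQ : (derivative Q).eval a =
      ∑ l ∈ Finset.univ.erase j, ∏ i ∈ (Finset.univ.erase j).erase l, (a - z i) := by
    rw [hQ, eval_derivative_prod_X_sub_C]
  have hfactor : ∀ l ∈ Finset.univ.erase j,
      ∏ i ∈ (Finset.univ.erase j).erase l, (a - z i) = (a - z l)⁻¹ * Q.eval a := by
    intro l hl
    have hzl : a - z l ≠ 0 := by
      rw [sub_ne_zero]
      exact fun h => (Finset.mem_erase.mp hl).1 (hinj h.symm)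
    have : Q.eval a = (a - z l) * ∏ i ∈ (Finset.univ.erase j).erase l, (a - z i) := by
      rw [hQ]
      simp only [eval_prod, eval_sub, eval_X, eval_C]
      exact (Finset.mul_prod_erase _ _ hl).symm
    rw [this]
    field_simp
  have : (derivative Q).eval a = (∑ l ∈ Finset.univ.erase j, (a - z l)⁻¹) * Q.eval a := by
    rw [hDQ, Finset.sum_congr rfl hfactor, ← Finset.sum_mul]
  rw [hkey] at this
  exact mul_right_cancel₀ hQa this.symm

lemma sum_even_only (g : ℕ → ℝ) (hg : ∀ i, Odd i → g i = 0) (t : ℕ) :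
    ∑ i ∈ range (2*t+1), g i = ∑ s ∈ range (t+1), g (2*s) := by
  induction t with
  | zero => simp
  | succ t ih =>
    have h1 : 2*(t+1)+1 = (2*t+1)+1+1 := by ring
    rw [h1, Finset.sum_range_succ g (2*t+1+1), Finset.sum_range_succ g (2*t+1), ih,
      hg (2*t+1) ⟨t, by ring⟩, Finset.sum_range_succ (fun s => g (2*s)) (t+1)]
    have h2 : 2*t+1+1 = 2*(t+1) := by ring
    rw [h2, add_zero]

/-- The power sums `m_p` of the zeros of the physicists' Hermite polynomial `H_N`
satisfy `m_0 = N`, vanish for odd `p`, and satisfy the recurrence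
`2 m_{k+2} = ∑_{s=0}^{k/2} m_{2s} m_{k-2s} - (k+1) m_k` for even `k`. -/
theorem stmt_1 (N : ℕ) (hN : 0 < N) (z : Fin N → ℝ)
    (hmono : StrictMono z) (hzero : ∀ j, (physHermite N).eval (z j) = 0)
    (m : ℕ → ℝ) (hm : ∀ p, m p = ∑ j, z j ^ p) :
    m 0 = N ∧ (∀ p, Odd p → m p = 0) ∧
      (∀ k, Even k →
        2 * m (k + 2) = (∑ s ∈ range (k / 2 + 1), m (2 * s) * m (k - 2 * s))
          - ((k : ℝ) + 1) * m k) := by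
  have hinj : Function.Injective z := hmono.injective
  -- m 0 = N
  have hm0 : m 0 = N := by rw [hm]; simp
  -- odd vanishing
  have hodd : ∀ p, Odd p → m p = 0 := by
    intro p hp
    obtain ⟨c, hc, hfac⟩ := ph_factor N z hinj hzero
    have hneg : ∀ j, ∃ i, z i = -z j := by
      intro j
      have h1 : (physHermite N).eval (-z j) = 0 := by
        have h2 : (physHermite N).eval (-z j) = ((physHermite N).comp (-X)).eval (z j) := by
          rw [eval_comp]; simp
        rw [h2, ph_comp_neg]
        simp [hzero j]
      rw [hfac] at h1
      simp only [eval_mul, eval_C, eval_prod, eval_sub, eval_X] at h1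
      rcases mul_eq_zero.mp h1 with h | h
      · exact absurd h hc
      · obtain ⟨i, _, hi⟩ := Finset.prod_eq_zero_iff.mp h
        exact ⟨i, by linarith [sub_eq_zero.mp hi]⟩
    choose σ hσ using hneg
    have hσinj : Function.Injective σ := by
      intro a b hab
      apply hinj
      have := hσ a
      rw [hab, hσ b] at this
      linarith
    have hσbij : Function.Bijective σ := Finite.injective_iff_bijective.mp hσinj
    have hsum : ∑ j, z j ^ p = -∑ j, z j ^ p :=
      calc ∑ j, z j ^ p = ∑ j, z (σ j) ^ p := (Function.Bijective.sum_comp hσbij _).symm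
        _ = ∑ j, (-z j) ^ p := by simp only [hσ]
        _ = ∑ j, -(z j ^ p) := by simp only [hp.neg_pow]
        _ = -∑ j, z j ^ p := Finset.sum_neg_distrib _
    rw [hm p]
    linarith
  refine ⟨hm0, hodd, ?_⟩
  intro k hk
  have hroot := ph_root_sum N z hinj hzero
  set f : Fin N → Fin N → ℝ := fun j l => z j ^ (k+1) * (z j - z l)⁻¹ with hf
  have hA : m (k+2) = ∑ j, ∑ l ∈ Finset.univ.erase j, f j l := by
    rw [hm]
    refine Finset.sum_congr rfl fun j _ => ?_
    rw [← Finset.mul_sum, hroot j, ← pow_succ]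
  have hswap : ∑ j, ∑ l ∈ Finset.univ.erase j, f j l
      = ∑ j, ∑ l ∈ Finset.univ.erase j, f l j := by
    exact Finset.sum_comm' (by intro x y; simp [Finset.mem_erase, eq_comm, ne_comm]) 
  have hC : 2 * m (k+2) = ∑ j, ∑ l ∈ Finset.univ.erase j,
      ∑ i ∈ range (k+1), z j ^ i * z l ^ (k - i) := by
    have : 2 * m (k+2) = ∑ j, ∑ l ∈ Finset.univ.erase j, (f j l + f l j) := by
      rw [hA, two_mul]
      nth_rewrite 2 [hswap]
      rw [← Finset.sum_add_distrib]
      exact Finset.sum_congr rfl fun j _ => (Finset.sum_add_distrib).symm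
    rw [this]
    refine Finset.sum_congr rfl fun j _ => Finset.sum_congr rfl fun l hl => ?_
    have hne : z j - z l ≠ 0 := sub_ne_zero.mpr
      (fun h => (Finset.mem_erase.mp hl).1 (hinj h.symm))
    have hgeom := geom_sum₂_mul (z j) (z l) (k+1)
    simp only [Nat.add_sub_cancel] at hgeom
    have : f j l + f l j = (z j ^ (k+1) - z l ^ (k+1)) * (z j - z l)⁻¹ := by
      rw [hf]
      simp only
      rw [show z l - z j = -(z j - z l) by ring, inv_neg]
      ring
    rw [this, ← hgeom, mul_assoc, mul_inv_cancel₀ hne, mul_one]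
  have hD : 2 * m (k+2) = (∑ i ∈ range (k+1), m i * m (k-i)) - ((k:ℝ)+1) * m k := by
    rw [hC]
    have step1 : ∀ j : Fin N, ∑ l ∈ Finset.univ.erase j, ∑ i ∈ range (k+1), z j ^ i * z l ^ (k-i)
        = ∑ i ∈ range (k+1), ∑ l ∈ Finset.univ.erase j, z j ^ i * z l ^ (k-i) :=
      fun j => Finset.sum_comm
    rw [Finset.sum_congr rfl (fun j _ => step1 j), Finset.sum_comm]
    have step2 : ∀ i ∈ range (k+1), (∑ j, ∑ l ∈ Finset.univ.erase j, z j ^ i * z l ^ (k-i))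
        = m i * m (k-i) - m k := by
      intro i hi
      have hik : i ≤ k := Nat.lt_succ_iff.mp (Finset.mem_range.mp hi)
      have inner : ∀ j : Fin N, (∑ l ∈ Finset.univ.erase j, z j ^ i * z l ^ (k-i))
          = z j ^ i * m (k-i) - z j ^ k := by
        intro j
        rw [← Finset.mul_sum, Finset.sum_erase_eq_sub (Finset.mem_univ j), ← hm (k-i),
          mul_sub, ← pow_add]
        congr 2
        omega
      rw [Finset.sum_congr rfl fun j _ => inner j, Finset.sum_sub_distrib, ← Finset.sum_mul,
        ← hm i, ← hm k]
    rw [Finset.sum_congr rfl step2, Finset.sum_sub_distrib, Finset.sum_const, card_range,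
      nsmul_eq_mul]
    push_cast
    ring
  obtain ⟨t, ht⟩ := hk
  have hdiv : k / 2 = t := by omega
  rw [hD, hdiv, show k + 1 = 2*t+1 by omega,
    sum_even_only (fun i => m i * m (k - i)) (fun i hi => show m i * m (k - i) = 0 by rw [hodd i hi, zero_mul]) t]
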